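/- arXiv:1705.06032 — 2 statements merged into one kernel-verified Lean document; each statement's English description precedes it below -/
import Mathlib

section
/- Let N ∈ ℕ be square-free and let k > 1 be an integer. Then for all divisors c, d of N, Σ_{t|N} (−1)^{ω(t)+ω(c)} · ( (N·gcd(c,t)/t) · (gcd(t,d)/d) )^{2k} equals Π_{p|N}(p^{2k}−1) if c = d, and equals 0 if c ≠ d (the sum is over positive divisors t of N, and the product is over the prime divisors p of N). -/
open Complex UpperHalfPlane Finset

noncomputable section

/-- The sum of divisors function `σ_k(n) = ∑_{0<d∣n} d^k` (and `σ_k(0) = 0`). -/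
def sigma' (k n : ℕ) : ℕ := ∑ d ∈ n.divisors, d ^ k

/-- `σ_k(n/d)`, equal to `0` when `d ∤ n` (i.e. when `n/d` is not a positive integer). -/
def sigmaDiv (k n d : ℕ) : ℕ := if d ∣ n then sigma' k (n / d) else 0

/-- `ω(n)`, the number of distinct prime divisors of `n`. -/
def omega (n : ℕ) : ℕ := n.primeFactors.card

/-- The Eisenstein series `E_{2k}(dz) = 1 - (4k/B_{2k}) ∑_{n≥1} σ_{2k-1}(n) e^{2πin(dz)}`
as a function on the upper half plane. -/
def Ek (k d : ℕ) (z : ℍ) : ℂ :=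
  1 - (4 * (k : ℂ) / ((bernoulli (2 * k) : ℚ) : ℂ)) *
    ∑' n : ℕ, (sigma' (2 * k - 1) n : ℂ) *
      Complex.exp (2 * Real.pi * Complex.I * (n : ℂ) * ((d : ℂ) * (z : ℂ)))

/-- The matrix `A_c = [[-1,0],[c,-1]] ∈ SL_2(ℤ)`. -/
def Ac (c : ℕ) : Matrix.SpecialLinearGroup (Fin 2) ℤ :=
  ⟨!![-1, 0; (c : ℤ), -1], by simp [Matrix.det_fin_two_of]⟩

/-- `IsExpansionAt f w c h a` : the function `f` (of weight `w`) has the Fourier expansion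
`f(A_c⁻¹ z) = (cz+1)^w ∑_{n≥0} a(n) e^{2πinz/h}` at the cusp `1/c`, `h` being the width. -/
def IsExpansionAt (f : ℍ → ℂ) (w : ℕ) (c h : ℕ) (a : ℕ → ℂ) : Prop :=
  ∀ z : ℍ,
    (Summable fun n : ℕ => a n * Complex.exp (2 * Real.pi * Complex.I * (n : ℂ) * (z : ℂ) / (h : ℂ))) ∧
    f ((Ac c)⁻¹ • z) =
      ((c : ℂ) * (z : ℂ) + 1) ^ w *
        ∑' n : ℕ, a n * Complex.exp (2 * Real.pi * Complex.I * (n : ℂ) * (z : ℂ) / (h : ℂ))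

/-- `IsExpansionInf f a` : `f` has the Fourier expansion `f(z) = ∑_{n≥0} a(n) q^n`,
`q = e^{2πiz}`, at the cusp `∞`. -/
def IsExpansionInf (f : ℍ → ℂ) (a : ℕ → ℂ) : Prop :=
  ∀ z : ℍ,
    (Summable fun n : ℕ => a n * Complex.exp (2 * Real.pi * Complex.I * (n : ℂ) * (z : ℂ))) ∧
    f z = ∑' n : ℕ, a n * Complex.exp (2 * Real.pi * Complex.I * (n : ℂ) * (z : ℂ))

/-- The product `∏_{p ∣ N} (p^{2k} - 1)` over the prime divisors of `N`. -/
def PP (N k : ℕ) : ℂ := ∏ p ∈ N.primeFactors, ((p : ℂ) ^ (2 * k) - 1)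

/-- The point `r z + s` of the upper half plane, for `r > 0`. -/
def mkPt (r s : ℝ) (hr : 0 < r) (z : ℍ) : ℍ :=
  ⟨(r : ℂ) * (z : ℂ) + (s : ℂ), by
    have h : ((r : ℂ) * (z : ℂ) + (s : ℂ)).im = r * z.im := by
      simp [Complex.add_im, Complex.mul_im]
    rw [h]
    exact mul_pos hr z.im_pos⟩

/-- The Dedekind eta function `η(dz)`, for the argument scaled by `d`. -/
def etaQ (d : ℕ) (z : ℍ) : ℂ :=
  Complex.exp (Real.pi * Complex.I * (d : ℂ) * (z : ℂ) / 12) *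
    ∏' n : ℕ, (1 - Complex.exp (2 * Real.pi * Complex.I * ((n : ℂ) + 1) * ((d : ℂ) * (z : ℂ))))

/-- The eta quotient `S(2k,6,i;z)`. -/
def S62 (k i : ℕ) (z : ℍ) : ℂ :=
  (etaQ 1 z ^ 6 * etaQ 6 z / (etaQ 2 z ^ 3 * etaQ 3 z ^ 2)) ^ (2 * k) *
    (etaQ 2 z * etaQ 6 z ^ 5 / (etaQ 1 z ^ 5 * etaQ 3 z)) ^ i *
    (etaQ 2 z ^ 13 * etaQ 3 z ^ 11 / (etaQ 1 z ^ 17 * etaQ 6 z ^ 7))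

/-- `g(dz)` where `g(z) = η²(z)/η(2z)`. -/
def gQ (d : ℕ) (z : ℍ) : ℂ := etaQ d z ^ 2 / etaQ (2 * d) z

/-- The convolution sum `W(a^l, b^m; n) = ∑_{ar+bs=n, r,s ≥ 1} σ_l(r) σ_m(s)`. -/
def Wconv (a l b m n : ℕ) : ℕ :=
  ∑ p ∈ (Finset.range (n + 1) ×ˢ Finset.range (n + 1)).filter
      (fun p => 1 ≤ p.1 ∧ 1 ≤ p.2 ∧ a * p.1 + b * p.2 = n),
    sigma' l p.1 * sigma' m p.2

/-- `N(1^r, p^s; n)`: the number of representations of `n` by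
`a(x_1²+⋯+x_r²) + b(y_1²+⋯+y_s²)`. -/
def repCount2 (a b r s n : ℕ) : ℕ :=
  Set.ncard {x : (Fin r → ℤ) × (Fin s → ℤ) |
    (a : ℤ) * ∑ i, (x.1 i) ^ 2 + (b : ℤ) * ∑ j, (x.2 j) ^ 2 = (n : ℤ)}

/-- The number of representations of `n` by the quadratic form
`∑_{δ ∣ N} ∑_{j=1}^{8 r_δ} δ x_j²`. -/
def repCount (N : ℕ) (r : ℕ → ℕ) (n : ℕ) : ℕ :=
  Set.ncard {x : ((δ : {d : ℕ // d ∈ N.divisors}) × Fin (8 * r δ.1)) → ℤ |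
    ∑ i, ((i.1.1 : ℤ)) * (x i) ^ 2 = (n : ℤ)}



lemma gcd_sqfree {a b : ℕ} (ha : Squarefree a) (hb : Squarefree b) :
    Nat.gcd a b = ∏ p ∈ a.primeFactors ∩ b.primeFactors, p := by
  have hg : Squarefree (Nat.gcd a b) := ha.squarefree_of_dvd (Nat.gcd_dvd_left a b)
  rw [← Nat.prod_primeFactors_of_squarefree hg, Nat.primeFactors_gcd ha.ne_zero hb.ne_zero]

/-- Lemma 3.1, orthogonality relation: for `N` square-free, `k > 1` and
`c, d ∣ N`, `∑_{t∣N} (-1)^{ω(t)+ω(c)} ((N gcd(c,t)/t)(gcd(t,d)/d))^{2k}` equals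
`∏_{p∣N}(p^{2k}-1)` if `c = d` and `0` otherwise. -/
theorem stmt2 (N k : ℕ) (hN : Squarefree N) (hk : 1 < k) (c d : ℕ)
    (hc : c ∣ N) (hd : d ∣ N) :
    (∑ t ∈ N.divisors,
        (-1 : ℚ) ^ (omega t + omega c) *
          (((N : ℚ) * (Nat.gcd c t : ℚ) / (t : ℚ)) * ((Nat.gcd t d : ℚ) / (d : ℚ))) ^ (2 * k))
      = if c = d then ∏ p ∈ N.primeFactors, ((p : ℚ) ^ (2 * k) - 1) else 0 := by
  classical
  have hN0 : N ≠ 0 := hN.ne_zero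
  have hA : ∀ p ∈ N.primeFactors, p.Prime := fun p hp => Nat.prime_of_mem_primeFactors hp
  have hsc : Squarefree c := hN.squarefree_of_dvd hc
  have hsd : Squarefree d := hN.squarefree_of_dvd hd
  set A := N.primeFactors with hAdef
  set C := c.primeFactors with hCdef
  set D := d.primeFactors with hDdef
  have hC : C ⊆ A := Nat.primeFactors_mono hc hN0
  have hD : D ⊆ A := Nat.primeFactors_mono hd hN0
  have hpos : ∀ S : Finset ℕ, S ⊆ A → (0:ℚ) < ∏ p ∈ S, (p:ℚ) := by
    intro S hS
    refine Finset.prod_pos fun p hp => ?_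
    exact_mod_cast (hA p (hS hp)).pos
  set u : ℕ → ℚ := fun p => (if p ∈ C then (1:ℚ) else -1) * (if p ∈ C then (p:ℚ) else 1) ^ (2*k)
    with hu
  set v : ℕ → ℚ := fun p => (if p ∈ C then (-1:ℚ) else 1) * (if p ∈ D then (1:ℚ) else (p:ℚ)) ^ (2*k)
    with hv
  have hsum : (∑ t ∈ N.divisors,
        (-1 : ℚ) ^ (omega t + omega c) *
          (((N : ℚ) * (Nat.gcd c t : ℚ) / (t : ℚ)) * ((Nat.gcd t d : ℚ) / (d : ℚ))) ^ (2 * k))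
      = ∑ T ∈ A.powerset, (∏ p ∈ T, u p) * ∏ p ∈ A \ T, v p := by
    refine Finset.sum_nbij' (fun t => t.primeFactors) (fun T => ∏ p ∈ T, p) ?_ ?_ ?_ ?_ ?_
    · intro t ht
      rw [Finset.mem_powerset]
      exact Nat.primeFactors_mono (Nat.dvd_of_mem_divisors ht) hN0
    · intro T hT
      rw [Finset.mem_powerset] at hT
      rw [Nat.mem_divisors]
      refine ⟨?_, hN0⟩
      calc (∏ p ∈ T, p) ∣ ∏ p ∈ A, p := Finset.prod_dvd_prod_of_subset _ _ _ hT
      _ = N := Nat.prod_primeFactors_of_squarefree hN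
    · intro t ht
      exact Nat.prod_primeFactors_of_squarefree (hN.squarefree_of_dvd (Nat.dvd_of_mem_divisors ht))
    · intro T hT
      rw [Finset.mem_powerset] at hT
      exact Nat.primeFactors_prod (fun p hp => hA p (hT hp))
    · intro t ht
      set T := t.primeFactors with hTdef
      have htdvd : t ∣ N := Nat.dvd_of_mem_divisors ht
      have hst : Squarefree t := hN.squarefree_of_dvd htdvd
      have hT : T ⊆ A := Nat.primeFactors_mono htdvd hN0
      have hNc : (N:ℚ) = ∏ p ∈ A, (p:ℚ) := by
        rw [← Nat.cast_prod, Nat.prod_primeFactors_of_squarefree hN]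
      have htc : (t:ℚ) = ∏ p ∈ T, (p:ℚ) := by
        rw [← Nat.cast_prod, Nat.prod_primeFactors_of_squarefree hst]
      have hdc : (d:ℚ) = ∏ p ∈ D, (p:ℚ) := by
        rw [← Nat.cast_prod, Nat.prod_primeFactors_of_squarefree hsd]
      have hg1 : ((Nat.gcd c t : ℕ):ℚ) = ∏ p ∈ C ∩ T, (p:ℚ) := by
        rw [gcd_sqfree hsc hst, Nat.cast_prod]
      have hg2 : ((Nat.gcd t d : ℕ):ℚ) = ∏ p ∈ T ∩ D, (p:ℚ) := by
        rw [gcd_sqfree hst hsd, Nat.cast_prod]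
      have homega_t : omega t = T.card := rfl
      have homega_c : omega c = C.card := rfl
      -- decompositions of the products
      have hDT : D \ T ⊆ A \ T := Finset.sdiff_subset_sdiff hD (le_refl T)
      have e1 : (∏ p ∈ A, (p:ℚ)) = (∏ p ∈ A \ T, (p:ℚ)) * ∏ p ∈ T, (p:ℚ) :=
        (Finset.prod_sdiff hT).symm
      have eAT : (A \ T) \ (D \ T) = (A \ T) \ D := by
        ext p
        simp only [Finset.mem_sdiff, not_and, not_not]
        tauto
      have e2 : (∏ p ∈ A \ T, (p:ℚ)) = (∏ p ∈ (A \ T) \ D, (p:ℚ)) * ∏ p ∈ D \ T, (p:ℚ) := by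
        rw [← eAT]
        exact (Finset.prod_sdiff hDT).symm
      have eD : D \ (T ∩ D) = D \ T := by
        ext p
        simp only [Finset.mem_sdiff, Finset.mem_inter, not_and]
        tauto
      have e3 : (∏ p ∈ D, (p:ℚ)) = (∏ p ∈ D \ T, (p:ℚ)) * ∏ p ∈ T ∩ D, (p:ℚ) := by
        rw [← eD]
        exact (Finset.prod_sdiff Finset.inter_subset_right).symm
      -- products of u and v
      have hfilter1 : T.filter (fun p => p ∈ C) = T ∩ C := Finset.filter_mem_eq_inter
      have hfilter2 : T.filter (fun p => ¬ p ∈ C) = T \ C := by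
        rw [Finset.sdiff_eq_filter]
      have hfilter3 : (A \ T).filter (fun p => p ∈ C) = (A \ T) ∩ C := Finset.filter_mem_eq_inter
      have hfilter4 : (A \ T).filter (fun p => ¬ p ∈ D) = (A \ T) \ D := by
        ext p
        simp only [Finset.mem_filter, Finset.mem_sdiff]
      have hup : (∏ p ∈ T, u p)
          = (-1:ℚ) ^ (T \ C).card * (∏ p ∈ T ∩ C, (p:ℚ)) ^ (2*k) := by
        rw [hu, Finset.prod_mul_distrib, Finset.prod_pow, Finset.prod_ite_mem,
          Finset.prod_ite, hfilter1, hfilter2, Finset.prod_const, Finset.prod_const, one_pow,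
          one_mul]
      have hvp : (∏ p ∈ A \ T, v p)
          = (-1:ℚ) ^ ((A \ T) ∩ C).card * (∏ p ∈ (A \ T) \ D, (p:ℚ)) ^ (2*k) := by
        rw [hv, Finset.prod_mul_distrib, Finset.prod_pow, Finset.prod_ite, Finset.prod_ite,
          hfilter3, hfilter4, Finset.prod_const, Finset.prod_const]
        simp
      -- sign identity
      have h1 : (A \ T) ∩ C = C \ T := by
        ext p
        simp only [Finset.mem_inter, Finset.mem_sdiff]
        constructor
        · rintro ⟨⟨_, hpT⟩, hpC⟩
          exact ⟨hpC, hpT⟩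
        · rintro ⟨hpC, hpT⟩
          exact ⟨⟨hC hpC, hpT⟩, hpC⟩
      have hcard : T.card + C.card = (T \ C).card + (C \ T).card + 2 * (T ∩ C).card := by
        have h2 := Finset.card_inter_add_card_sdiff T C
        have h3 := Finset.card_inter_add_card_sdiff C T
        rw [Finset.inter_comm C T] at h3
        omega
      have hsign : (-1:ℚ) ^ (T.card + C.card)
          = (-1:ℚ) ^ (T \ C).card * (-1:ℚ) ^ ((A \ T) ∩ C).card := by
        rw [h1, hcard, pow_add, pow_add, pow_mul, neg_one_sq, one_pow, mul_one]
      -- base identity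
      have hT0 : (∏ p ∈ T, (p:ℚ)) ≠ 0 := (hpos T hT).ne'
      have hD0 : (∏ p ∈ D \ T, (p:ℚ)) ≠ 0 := (hpos _ ((Finset.sdiff_subset).trans hD)).ne'
      have hTD0 : (∏ p ∈ T ∩ D, (p:ℚ)) ≠ 0 :=
        (hpos _ ((Finset.inter_subset_left).trans hT)).ne'
      have hbase : ((∏ p ∈ A, (p:ℚ)) * (∏ p ∈ C ∩ T, (p:ℚ)) / (∏ p ∈ T, (p:ℚ)))
            * ((∏ p ∈ T ∩ D, (p:ℚ)) / (∏ p ∈ D, (p:ℚ)))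
          = (∏ p ∈ T ∩ C, (p:ℚ)) * (∏ p ∈ (A \ T) \ D, (p:ℚ)) := by
        rw [e1, e2, e3, Finset.inter_comm C T]
        field_simp
      rw [homega_t, homega_c, hNc, htc, hdc, hg1, hg2, hup, hvp, hbase, hsign, mul_pow]
      ring
  rw [hsum, ← Finset.prod_add]
  by_cases hcd : c = d
  · rw [if_pos hcd]
    have hCD : C = D := by rw [hCdef, hDdef, hcd]
    refine Finset.prod_congr rfl fun p hp => ?_
    by_cases hpC : p ∈ C
    · simp only [hu, hv, hpC, if_true, ← hCD, one_pow, one_mul, mul_one, neg_one_mul]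
      ring
    · simp only [hu, hv, hpC, if_false, ← hCD, one_pow, one_mul, mul_one, neg_one_mul]
      ring
  · rw [if_neg hcd]
    have hCD : C ≠ D := by
      intro h
      apply hcd
      rw [← Nat.prod_primeFactors_of_squarefree hsc, ← Nat.prod_primeFactors_of_squarefree hsd]
      rw [hCdef, hDdef] at h
      rw [h]
    obtain ⟨p, hp⟩ : ∃ p, (p ∈ C ∧ p ∉ D) ∨ (p ∈ D ∧ p ∉ C) := by
      by_contra h
      push_neg at h
      exact hCD (Finset.ext fun p => by have := h p; tauto)
    rcases hp with ⟨hpC, hpD⟩ | ⟨hpD, hpC⟩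
    · refine Finset.prod_eq_zero (hC hpC) ?_
      simp only [hu, hv, hpC, hpD, if_true, if_false]
      ring
    · refine Finset.prod_eq_zero (hD hpD) ?_
      simp only [hu, hv, hpC, hpD, if_true, if_false]
      ring


end
end

section
/- Let N ∈ ℕ be square-free, k > 1 an integer, c, d | N, and define T(c,d;N) = Σ_{t|N} (−1)^{ω(t)+ω(c)} · ( (N·gcd(c,t)/t) · (gcd(t,d)/d) )^{2k}. Then for every prime p dividing N, T(c,d;N) = (p^{2k} − (gcd(c,p)·gcd(d,p))^{2k}) · T(c,d;N/p). -/
open Complex UpperHalfPlane Finset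

noncomputable section

lemma gcd_mul_coprime (c p t : ℕ) (h : Nat.Coprime p t) :
    Nat.gcd c (p * t) = Nat.gcd c p * Nat.gcd c t := by
  apply Nat.dvd_antisymm
  · have h1 : Nat.gcd c (p * t) ∣ Nat.gcd (Nat.gcd c (p * t)) p * Nat.gcd (Nat.gcd c (p * t)) t :=
      Nat.dvd_gcd_mul_gcd_iff_dvd_mul.mpr (Nat.gcd_dvd_right _ _)
    exact h1.trans (mul_dvd_mul
      (Nat.dvd_gcd ((Nat.gcd_dvd_left _ _).trans (Nat.gcd_dvd_left c (p * t))) (Nat.gcd_dvd_right _ _))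
      (Nat.dvd_gcd ((Nat.gcd_dvd_left _ _).trans (Nat.gcd_dvd_left c (p * t))) (Nat.gcd_dvd_right _ _)))
  · have hco : Nat.Coprime (Nat.gcd c p) (Nat.gcd c t) :=
      Nat.Coprime.coprime_dvd_right (Nat.gcd_dvd_right c t)
        (Nat.Coprime.coprime_dvd_left (Nat.gcd_dvd_right c p) h)
    exact Nat.dvd_gcd (hco.mul_dvd_of_dvd_of_dvd (Nat.gcd_dvd_left c p) (Nat.gcd_dvd_left c t))
      (mul_dvd_mul (Nat.gcd_dvd_right c p) (Nat.gcd_dvd_right c t))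

lemma omega_mul_prime {p t : ℕ} (hp : p.Prime) (ht : t ≠ 0) (hpt : ¬ p ∣ t) :
    omega (p * t) = omega t + 1 := by
  unfold omega
  rw [Nat.primeFactors_mul hp.ne_zero ht, hp.primeFactors]
  rw [← Finset.insert_eq, Finset.card_insert_of_notMem (by simp [Nat.mem_primeFactors, hpt])]



/-- recursion step in the proof of Lemma 3.1: with
`T(c,d;N) = ∑_{t∣N} (-1)^{ω(t)+ω(c)} ((N gcd(c,t)/t)(gcd(t,d)/d))^{2k}`, for every prime
`p ∣ N` one has `T(c,d;N) = (p^{2k} - (gcd(c,p) gcd(d,p))^{2k}) T(c,d;N/p)`. -/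
theorem stmt3 (N k : ℕ) (hN : Squarefree N) (hk : 1 < k) (c d : ℕ)
    (hc : c ∣ N) (hd : d ∣ N) (p : ℕ) (hp : p.Prime) (hpN : p ∣ N) :
    (∑ t ∈ N.divisors,
        (-1 : ℚ) ^ (omega t + omega c) *
          (((N : ℚ) * (Nat.gcd c t : ℚ) / (t : ℚ)) * ((Nat.gcd t d : ℚ) / (d : ℚ))) ^ (2 * k))
      = ((p : ℚ) ^ (2 * k) - ((Nat.gcd c p : ℚ) * (Nat.gcd d p : ℚ)) ^ (2 * k)) *
          ∑ t ∈ (N / p).divisors,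
            (-1 : ℚ) ^ (omega t + omega c) *
              ((((N / p : ℕ) : ℚ) * (Nat.gcd c t : ℚ) / (t : ℚ)) *
                ((Nat.gcd t d : ℚ) / (d : ℚ))) ^ (2 * k) := by
  have hN0 : N ≠ 0 := hN.ne_zero
  set M := N / p with hMdef
  have hNM : N = p * M := (Nat.mul_div_cancel' hpN).symm
  have hM0 : M ≠ 0 := by rintro h; rw [h, mul_zero] at hNM; exact hN0 hNM
  have hpM : Nat.Coprime p M := by
    have := hN
    rw [hNM] at this
    exact (Nat.squarefree_mul_iff.mp this).1
  have hpd : ¬ p ∣ M := fun h => hp.one_lt.ne' (Nat.dvd_one.mp (hpM ▸ Nat.dvd_gcd dvd_rfl h))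
  have hd0 : (d : ℚ) ≠ 0 := by
    have : d ≠ 0 := fun h => hN0 (Nat.eq_zero_of_zero_dvd (h ▸ hd))
    exact_mod_cast this
  have hp0 : (p : ℚ) ≠ 0 := Nat.cast_ne_zero.mpr hp.ne_zero
  -- set decomposition
  have hinj : Set.InjOn (fun t => p * t) M.divisors := fun a _ b _ h =>
    Nat.eq_of_mul_eq_mul_left hp.pos h
  have hset : N.divisors = M.divisors ∪ M.divisors.image (fun t => p * t) := by
    ext a
    simp only [Nat.mem_divisors, Finset.mem_union, Finset.mem_image]
    constructor
    · rintro ⟨ha, -⟩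
      by_cases hpa : p ∣ a
      · obtain ⟨b, rfl⟩ := hpa
        right
        refine ⟨b, ⟨?_, hM0⟩, rfl⟩
        rw [hNM] at ha
        exact (mul_dvd_mul_iff_left hp.pos.ne').mp ha
      · left
        refine ⟨?_, hM0⟩
        have hco : Nat.Coprime a p := ((hp.coprime_iff_not_dvd.mpr hpa)).symm
        exact hco.dvd_of_dvd_mul_left (hNM ▸ ha)
    · rintro (⟨ha, -⟩ | ⟨b, ⟨hb, -⟩, rfl⟩)
      · exact ⟨ha.trans ⟨p, by rw [hNM, mul_comm]⟩, hN0⟩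
      · exact ⟨hNM ▸ mul_dvd_mul_left p hb, hN0⟩
  have hdisj : Disjoint M.divisors (M.divisors.image (fun t => p * t)) := by
    rw [Finset.disjoint_right]
    rintro a ha haM
    obtain ⟨b, -, rfl⟩ := Finset.mem_image.mp ha
    exact hpd ((dvd_mul_right p b).trans (Nat.mem_divisors.mp haM).1)
  rw [hset, Finset.sum_union hdisj, Finset.sum_image (fun a ha b hb h => hinj ha hb h),
    Finset.mul_sum, ← Finset.sum_add_distrib]
  refine Finset.sum_congr rfl fun t ht => ?_
  obtain ⟨htM, -⟩ := Nat.mem_divisors.mp ht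
  have ht0 : (t : ℚ) ≠ 0 := Nat.cast_ne_zero.mpr (fun h => hM0 (Nat.eq_zero_of_zero_dvd (h ▸ htM)))
  have hcop : Nat.Coprime p t := hpM.coprime_dvd_right htM
  have hptd : ¬ p ∣ t := fun h => hpd (h.trans htM)
  have homega : omega (p * t) = omega t + 1 :=
    omega_mul_prime hp (fun h => by simp [h] at ht0) hptd
  have hg1 : Nat.gcd c (p * t) = Nat.gcd c p * Nat.gcd c t := gcd_mul_coprime c p t hcop
  have hg2 : Nat.gcd (p * t) d = Nat.gcd d p * Nat.gcd d t := by
    rw [Nat.gcd_comm]; exact gcd_mul_coprime d p t hcop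
  have hgtd : Nat.gcd t d = Nat.gcd d t := Nat.gcd_comm t d
  have hNQ : (N : ℚ) = p * M := by exact_mod_cast congrArg Nat.cast hNM
  rw [homega, hg1, hg2, hgtd, hNQ]
  push_cast
  have hb1 : (p : ℚ) * M * (Nat.gcd c t) / t * ((Nat.gcd d t) / d)
      = p * ((M : ℚ) * (Nat.gcd c t) / t * ((Nat.gcd d t) / d)) := by ring
  have hb2 : (p : ℚ) * M * ((Nat.gcd c p) * (Nat.gcd c t)) / (p * t) * ((Nat.gcd d p) * (Nat.gcd d t) / d)
      = ((Nat.gcd c p : ℚ) * (Nat.gcd d p)) * ((M : ℚ) * (Nat.gcd c t) / t * ((Nat.gcd d t) / d)) := by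
    field_simp
  rw [hb1, hb2, pow_add, pow_add, pow_succ, mul_pow, mul_pow]
  ring


end
end
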